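/- Consider the graph on ℝ where x and y are adjacent iff |x - y| = √2 + q for some rational q. The connected component of 0 is {n√2 + q : n ∈ ℤ, q ∈ ℚ}, and coloring n√2 + q by the parity of n is a proper 2-coloring of this component. -/

import Mathlib

noncomputable def shelahSoifer : SimpleGraph ℝ :=
  SimpleGraph.fromRel (fun x y => ∃ q : ℚ, |x - y| = Real.sqrt 2 + q)

lemma ss_adj_iff {x y : ℝ} :
    shelahSoifer.Adj x y ↔ x ≠ y ∧ ∃ q : ℚ, |x - y| = Real.sqrt 2 + q := by
  constructor
  · rintro ⟨hne, h | ⟨q, hq⟩⟩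
    · exact ⟨hne, h⟩
    · exact ⟨hne, q, by rwa [abs_sub_comm]⟩
  · rintro ⟨hne, h⟩
    exact ⟨hne, Or.inl h⟩

lemma ss_int_mul_sqrt2 {k : ℤ} {c : ℚ} (h : (k : ℝ) * Real.sqrt 2 = c) : k = 0 := by
  by_contra hk
  exact (irrational_sqrt_two.intCast_mul hk) ⟨c, h.symm⟩

lemma ss_adj_add (x : ℝ) (r : ℚ) (hr : 0 < Real.sqrt 2 + r) :
    shelahSoifer.Adj x (x + (Real.sqrt 2 + r)) := by
  rw [ss_adj_iff]
  refine ⟨fun h => (ne_of_gt hr) (by linarith [congrArg (· - x) h] ; ), r, ?_⟩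
  rw [show x - (x + (Real.sqrt 2 + r)) = -(Real.sqrt 2 + r) by ring, abs_neg, abs_of_pos hr]

lemma ss_reach_add_rat (x : ℝ) (q : ℚ) : shelahSoifer.Reachable x (x + q) := by
  set r : ℚ := max q 0 with hrdef
  have hr0 : (0:ℚ) ≤ r := le_max_right _ _
  have hrq : q ≤ r := le_max_left _ _
  have h2 : (0:ℝ) < Real.sqrt 2 := Real.sqrt_pos.mpr (by norm_num)
  have hpos : (0:ℝ) < Real.sqrt 2 + r := by
    have : (0:ℝ) ≤ (r:ℝ) := by exact_mod_cast hr0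
    linarith
  have e1 : shelahSoifer.Adj x (x + (Real.sqrt 2 + r)) := ss_adj_add x r hpos
  have e2 : shelahSoifer.Adj (x + (Real.sqrt 2 + r)) (x + q) := by
    rw [ss_adj_iff]
    have hrq' : (q:ℝ) ≤ (r:ℝ) := by exact_mod_cast hrq
    constructor
    · intro h
      have : Real.sqrt 2 + (r:ℝ) = q := by linarith [congrArg (· - x) h]
      have : ((r - q : ℚ) : ℝ) = -(Real.sqrt 2) := by push_cast; linarith
      exact (irrational_sqrt_two.neg) ⟨r - q, this⟩
    · refine ⟨r - q, ?_⟩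
      rw [show x + (Real.sqrt 2 + r) - (x + q) = Real.sqrt 2 + ((r:ℝ) - q) by ring]
      push_cast
      rw [abs_of_pos (by linarith)]
  exact (e1.reachable).trans e2.reachable

lemma ss_reach_add_sqrt2 (x : ℝ) : shelahSoifer.Reachable x (x + Real.sqrt 2) := by
  have := ss_adj_add x 0 (by positivity)
  simpa using this.reachable

lemma ss_reach_int (n : ℤ) : shelahSoifer.Reachable 0 ((n : ℝ) * Real.sqrt 2) := by
  induction n using Int.induction_on with
  | zero =>
      simp only [Int.cast_zero, zero_mul]
      exact SimpleGraph.Reachable.refl 0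
  | succ k ih =>
      have := (ih.trans (ss_reach_add_sqrt2 ((k : ℝ) * Real.sqrt 2)))
      have heq : ((k : ℝ)) * Real.sqrt 2 + Real.sqrt 2 = ((k + 1 : ℤ) : ℝ) * Real.sqrt 2 := by
        push_cast; ring
      rwa [heq] at this
  | pred k ih =>
      have h2 := ss_reach_add_sqrt2 (((-k - 1 : ℤ) : ℝ) * Real.sqrt 2)
      have heq : ((-k - 1 : ℤ) : ℝ) * Real.sqrt 2 + Real.sqrt 2 = ((-k : ℤ) : ℝ) * Real.sqrt 2 := by
        push_cast; ring
      rw [heq] at h2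
      exact ih.trans h2.symm

lemma ss_closed {x y : ℝ} (hx : ∃ n : ℤ, ∃ q : ℚ, x = n * Real.sqrt 2 + q)
    (h : shelahSoifer.Adj x y) : ∃ n : ℤ, ∃ q : ℚ, y = n * Real.sqrt 2 + q := by
  obtain ⟨n, q, rfl⟩ := hx
  obtain ⟨-, r, hr⟩ := ss_adj_iff.mp h
  rcases abs_cases ((n : ℝ) * Real.sqrt 2 + q - y) with ⟨h1, -⟩ | ⟨h1, -⟩
  · refine ⟨n - 1, q - r, ?_⟩
    push_cast
    rw [h1] at hr
    linarith [hr]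
  · refine ⟨n + 1, q + r, ?_⟩
    push_cast
    rw [h1] at hr
    linarith [hr]

lemma ss_forward {x y : ℝ} (w : shelahSoifer.Walk x y)
    (hx : ∃ n : ℤ, ∃ q : ℚ, x = n * Real.sqrt 2 + q) :
    ∃ n : ℤ, ∃ q : ℚ, y = n * Real.sqrt 2 + q := by
  induction w with
  | nil => exact hx
  | cons h _ ih => exact ih (ss_closed hx h)

theorem shelah_soifer_component_and_coloring :
    (∀ x : ℝ, shelahSoifer.Reachable 0 x ↔
      ∃ n : ℤ, ∃ q : ℚ, x = n * Real.sqrt 2 + q) ∧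
    (∀ n m : ℤ, ∀ q p : ℚ,
      shelahSoifer.Adj (n * Real.sqrt 2 + q) (m * Real.sqrt 2 + p) → n % 2 ≠ m % 2) := by
  constructor
  · intro x
    constructor
    · intro h
      obtain ⟨w⟩ := h
      exact ss_forward w ⟨0, 0, by simp⟩
    · rintro ⟨n, q, rfl⟩
      exact (ss_reach_int n).trans (ss_reach_add_rat _ q)
  · intro n m q p hadj
    obtain ⟨-, r, hr⟩ := ss_adj_iff.mp hadj
    have hnm : n = m + 1 ∨ n = m - 1 := by
      rcases abs_cases ((n : ℝ) * Real.sqrt 2 + q - ((m : ℝ) * Real.sqrt 2 + p)) with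
        ⟨h1, -⟩ | ⟨h1, -⟩
      · left
        have key : ((n - m - 1 : ℤ) : ℝ) * Real.sqrt 2 = ((r - q + p : ℚ) : ℝ) := by
          rw [h1] at hr
          push_cast
          linarith [hr]
        have := ss_int_mul_sqrt2 key
        omega
      · right
        have key : ((n - m + 1 : ℤ) : ℝ) * Real.sqrt 2 = ((-r - q + p : ℚ) : ℝ) := by
          rw [h1] at hr
          push_cast
          linarith [hr]
        have := ss_int_mul_sqrt2 key
        omega
    omega
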